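/- Let G be a countable group and μ a random forest on G of finite width. Then the function f_μ(g) = μ{F : (1,g) ∈ F} satisfies ‖f_μ‖_{T¹(G)} ≤ 2, where the T¹ norm of a finitely supported f : G → ℂ is the infimum, over all decompositions f(g⁻¹g') = f⁺(g,g') + f⁻(g,g') for all g,g' ∈ G, of sup_g ∑_{g'} |f⁺(g,g')| + sup_g ∑_{g'} |f⁻(g',g)|. -/

import Mathlib

open MeasureTheory ENNReal

def forestGraph {G : Type*} (F : G × G → Bool) : SimpleGraph G :=
  SimpleGraph.fromRel fun a b => F (a, b) = true

def IsForest {G : Type*} (F : G × G → Bool) : Prop :=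
  (∀ a b, F (a, b) = F (b, a)) ∧ (∀ a, F (a, a) = false) ∧ (forestGraph F).IsAcyclic


/-- The `T¹`-norm of a function `f : K → ℂ`: the infimum over all decompositions
`f(g⁻¹g') = f⁺(g,g') + f⁻(g,g')` of `sup_g ∑_{g'} |f⁺(g,g')| + sup_g ∑_{g'} |f⁻(g',g)|`. -/
noncomputable def T1norm {K : Type*} [Group K] (f : K → ℂ) : ℝ≥0∞ :=
  ⨅ (d : (K × K → ℂ) × (K × K → ℂ))
    (_ : ∀ g g' : K, f (g⁻¹ * g') = d.1 (g, g') + d.2 (g, g')),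
      (⨆ g : K, ∑' g' : K, ENNReal.ofReal ‖d.1 (g, g')‖) +
      (⨆ g : K, ∑' g' : K, ENNReal.ofReal ‖d.2 (g', g)‖)

namespace Stmt3Aux

open SimpleGraph

variable {V : Type*}

lemma getLast?_support {H : SimpleGraph V} {g r : V} (w : H.Walk g r) :
    w.support.getLast? = some r := by
  induction w with
  | nil => rfl
  | @cons u v w h p ih =>
    rw [Walk.support_cons, Walk.support_eq_cons p, List.getLast?_cons_cons,
      ← Walk.support_eq_cons p]
    exact ih

lemma reachable_iff_chain {H : SimpleGraph V} {g u : V} :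
    H.Reachable g u ↔ ∃ l : List V, (g :: l).Chain' H.Adj ∧ (g :: l).getLast? = some u := by
  constructor
  · rintro ⟨w⟩
    refine ⟨w.support.tail, ?_, ?_⟩
    · rw [← Walk.support_eq_cons]; exact w.isChain_adj_support
    · rw [← Walk.support_eq_cons]; exact getLast?_support w
  · rintro ⟨l, hc, hl⟩
    induction l generalizing g with
    | nil => simp at hl; exact hl ▸ Reachable.refl g
    | cons a t ih =>
      simp only [List.Chain', List.isChain_cons_cons] at hc
      exact (hc.1.reachable).trans (ih hc.2 (by simpa using hl))

lemma walk_of_chain {H : SimpleGraph V} :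
    ∀ (l : List V) (g : V), (g :: l).Chain' H.Adj →
      ∃ (r : V) (w : H.Walk g r), w.support = g :: l := by
  intro l
  induction l with
  | nil => exact fun g _ => ⟨g, Walk.nil, by simp⟩
  | cons a t ih =>
    intro g hc
    simp only [List.Chain', List.isChain_cons_cons] at hc
    obtain ⟨r, w, hw⟩ := ih a hc.2
    exact ⟨r, Walk.cons hc.1 w, by simp [hw]⟩

/-- `g'` is the parent of `g` (second vertex on a path from `g` to `r`). -/
def WalkPar (H : SimpleGraph V) (g r g' : V) : Prop :=
  ∃ p : H.Walk g r, p.IsPath ∧ p.support.tail.head? = some g'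

lemma walkPar_iff_list {H : SimpleGraph V} {g r g' : V} :
    WalkPar H g r g' ↔ ∃ l : List V, (g :: l).Chain' H.Adj ∧ (g :: l).Nodup ∧
      (g :: l).getLast? = some r ∧ l.head? = some g' := by
  constructor
  · rintro ⟨p, hp, hh⟩
    refine ⟨p.support.tail, ?_, ?_, ?_, hh⟩ <;> rw [← Walk.support_eq_cons]
    · exact p.isChain_adj_support
    · exact hp.support_nodup
    · exact getLast?_support p
  · rintro ⟨l, hc, hnd, hlast, hh⟩
    obtain ⟨r', w, hw⟩ := walk_of_chain l g hc
    have hr' : (g :: l).getLast? = some r' := hw ▸ getLast?_support w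
    obtain rfl : r' = r := by rw [hr'] at hlast; exact Option.some.inj hlast
    refine ⟨w, Walk.IsPath.mk' (hw ▸ hnd), ?_⟩
    rw [hw]; exact hh

lemma walkPar_destruct {H : SimpleGraph V} {g r g' : V} (h : WalkPar H g r g') :
    H.Adj g g' ∧ ∃ p₁ : H.Walk g' r, p₁.IsPath ∧ g ∉ p₁.support := by
  obtain ⟨p, hp, hh⟩ := h
  cases p with
  | nil => simp at hh
  | @cons _ x _ h' p₁ =>
    rw [Walk.support_cons] at hh
    simp only [List.tail_cons] at hh
    have hx : p₁.support.head? = some x := by rw [Walk.support_eq_cons]; rfl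
    obtain rfl : x = g' := by rw [hx] at hh; exact Option.some.inj hh
    rw [Walk.cons_isPath_iff] at hp
    exact ⟨h', p₁, hp.1, hp.2⟩

lemma walkPar_dichotomy {H : SimpleGraph V} (hac : H.IsAcyclic) {g g' r : V}
    (hadj : H.Adj g g') (hreach : H.Reachable g r) :
    WalkPar H g r g' ∨ WalkPar H g' r g := by
  classical
  obtain ⟨w⟩ := (hadj.symm.reachable).trans hreach
  set q : H.Path g' r := w.toPath with hqdef
  by_cases hg : g ∈ q.1.support
  · right
    have hq1 : (q.1.takeUntil g hg).IsPath := q.2.takeUntil hg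
    have he : (Walk.cons hadj.symm Walk.nil : H.Walk g' g).IsPath := by
      rw [Walk.cons_isPath_iff]; simpa using hadj.ne'
    have heq : (⟨q.1.takeUntil g hg, hq1⟩ : H.Path g' g) = ⟨Walk.cons hadj.symm Walk.nil, he⟩ :=
      isAcyclic_iff_path_unique.mp hac _ _
    have heq' : q.1.takeUntil g hg = Walk.cons hadj.symm Walk.nil := congrArg Subtype.val heq
    refine ⟨q.1, q.2, ?_⟩
    have hs : q.1.support =
        (q.1.takeUntil g hg).support ++ (q.1.dropUntil g hg).support.tail := by
      rw [← Walk.support_append, Walk.take_spec]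
    rw [hs, heq']
    simp
    rw [Walk.support_eq_cons]; rfl
  · left
    refine ⟨Walk.cons hadj q.1, ?_, ?_⟩
    · rw [Walk.cons_isPath_iff]; exact ⟨q.2, hg⟩
    · rw [Walk.support_cons]
      simp only [List.tail_cons]
      rw [Walk.support_eq_cons]
      rfl

lemma walkPar_exclusive {H : SimpleGraph V} (hac : H.IsAcyclic) {g g' r : V} :
    ¬(WalkPar H g r g' ∧ WalkPar H g' r g) := by
  rintro ⟨h1, h2⟩
  obtain ⟨_, p₁, hp₁, hgp⟩ := walkPar_destruct h1
  obtain ⟨hadj2, q₁, hq₁, hg'q⟩ := walkPar_destruct h2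
  have hq : (Walk.cons hadj2 q₁ : H.Walk g' r).IsPath := by
    rw [Walk.cons_isPath_iff]; exact ⟨hq₁, hg'q⟩
  have heq : (⟨p₁, hp₁⟩ : H.Path g' r) = ⟨Walk.cons hadj2 q₁, hq⟩ :=
    isAcyclic_iff_path_unique.mp hac _ _
  have heq' : p₁ = Walk.cons hadj2 q₁ := congrArg Subtype.val heq
  apply hgp
  rw [heq', Walk.support_cons]
  exact List.mem_cons_of_mem _ q₁.start_mem_support

lemma walkPar_unique {H : SimpleGraph V} (hac : H.IsAcyclic) {g r g₁ g₂ : V}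
    (h1 : WalkPar H g r g₁) (h2 : WalkPar H g r g₂) : g₁ = g₂ := by
  obtain ⟨p, hp, hh1⟩ := h1
  obtain ⟨q, hq, hh2⟩ := h2
  have heq : p = q := congrArg Subtype.val (isAcyclic_iff_path_unique.mp hac ⟨p, hp⟩ ⟨q, hq⟩)
  rw [heq] at hh1
  exact Option.some.inj (hh1.symm.trans hh2)


variable {G : Type*}

def adjF (F : G × G → Bool) (a b : G) : Prop :=
  a ≠ b ∧ (F (a, b) = true ∨ F (b, a) = true)

lemma forestGraph_adj (F : G × G → Bool) : (forestGraph F).Adj = adjF F := by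
  ext a b
  simp [forestGraph, SimpleGraph.fromRel_adj, adjF]

noncomputable def enum (G : Type*) [Countable G] : G ↪ ℕ :=
  (nonempty_embedding_nat G).some

def reachF (F : G × G → Bool) (g u : G) : Prop :=
  ∃ l : List G, (g :: l).Chain' (adjF F) ∧ (g :: l).getLast? = some u

lemma reachF_iff (F : G × G → Bool) (g u : G) :
    reachF F g u ↔ (forestGraph F).Reachable g u := by
  rw [reachable_iff_chain, forestGraph_adj]; rfl

def isRootF [Countable G] (F : G × G → Bool) (g r : G) : Prop :=
  reachF F g r ∧ ∀ u, reachF F g u → enum G r ≤ enum G u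

def pathF (F : G × G → Bool) (g r g' : G) : Prop :=
  ∃ l : List G, (g :: l).Chain' (adjF F) ∧ (g :: l).Nodup ∧
    (g :: l).getLast? = some r ∧ l.head? = some g'

lemma pathF_iff (F : G × G → Bool) (g r g' : G) :
    pathF F g r g' ↔ WalkPar (forestGraph F) g r g' := by
  rw [walkPar_iff_list, forestGraph_adj]; rfl

/-- The oriented-edge relation: `(g, g')` is an edge of `F` oriented from `g` towards
the root (earliest vertex) of its tree. -/
def ParF [Countable G] (F : G × G → Bool) (g g' : G) : Prop :=
  IsForest F ∧ F (g, g') = true ∧ ∃ r, isRootF F g r ∧ pathF F g r g'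

lemma root_exists [Countable G] (F : G × G → Bool) (g : G) : ∃ r, isRootF F g r := by
  have hself : reachF F g g := ⟨[], by simp [List.Chain'], by simp⟩
  have hne : (enum G '' {u | reachF F g u}).Nonempty := ⟨enum G g, g, hself, rfl⟩
  obtain ⟨r, hr, he⟩ := Nat.sInf_mem hne
  exact ⟨r, hr, fun u hu => he ▸ Nat.sInf_le ⟨u, hu, rfl⟩⟩

lemma root_unique [Countable G] {F : G × G → Bool} {g r₁ r₂ : G}
    (h1 : isRootF F g r₁) (h2 : isRootF F g r₂) : r₁ = r₂ :=
  (enum G).injective (le_antisymm (h1.2 r₂ h2.1) (h2.2 r₁ h1.1))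

lemma isRootF_congr [Countable G] {F : G × G → Bool} {g g' r : G}
    (h : adjF F g g') : isRootF F g r ↔ isRootF F g' r := by
  have hadj : (forestGraph F).Adj g g' := by rw [forestGraph_adj]; exact h
  have hre : ∀ u, reachF F g u ↔ reachF F g' u := by
    intro u
    rw [reachF_iff, reachF_iff]
    exact ⟨fun h' => (hadj.symm.reachable).trans h', fun h' => (hadj.reachable).trans h'⟩
  constructor
  · rintro ⟨h1, h2⟩
    exact ⟨(hre r).mp h1, fun u hu => h2 u ((hre u).mpr hu)⟩
  · rintro ⟨h1, h2⟩
    exact ⟨(hre r).mpr h1, fun u hu => h2 u ((hre u).mp hu)⟩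

lemma parF_cover [Countable G] {F : G × G → Bool} (hF : IsForest F) {g g' : G}
    (hE : F (g, g') = true) : ParF F g g' ∨ ParF F g' g := by
  have hne : g ≠ g' := by
    rintro rfl
    rw [hF.2.1 g] at hE
    exact Bool.false_ne_true hE
  have hadjF : adjF F g g' := ⟨hne, Or.inl hE⟩
  have hadj : (forestGraph F).Adj g g' := by rw [forestGraph_adj]; exact hadjF
  obtain ⟨r, hr⟩ := root_exists F g
  have hreach : (forestGraph F).Reachable g r := (reachF_iff F g r).mp hr.1
  rcases walkPar_dichotomy hF.2.2 hadj hreach with h | h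
  · exact Or.inl ⟨hF, hE, r, hr, (pathF_iff F g r g').mpr h⟩
  · refine Or.inr ⟨hF, ?_, r, (isRootF_congr hadjF).mp hr, (pathF_iff F g' r g).mpr h⟩
    rw [hF.1 g' g]; exact hE

lemma parF_not_both [Countable G] {F : G × G → Bool} {g g' : G} :
    ¬(ParF F g g' ∧ ParF F g' g) := by
  rintro ⟨⟨hF, hE, r₁, hr₁, hp₁⟩, ⟨-, -, r₂, hr₂, hp₂⟩⟩
  have hne : g ≠ g' := by
    rintro rfl
    rw [hF.2.1 g] at hE
    exact Bool.false_ne_true hE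
  have hadjF : adjF F g g' := ⟨hne, Or.inl hE⟩
  obtain rfl : r₁ = r₂ := root_unique hr₁ ((isRootF_congr hadjF).mpr hr₂)
  exact walkPar_exclusive hF.2.2 ⟨(pathF_iff F g r₁ g').mp hp₁, (pathF_iff F g' r₁ g).mp hp₂⟩

lemma parF_unique [Countable G] {F : G × G → Bool} {g g₁ g₂ : G}
    (h1 : ParF F g g₁) (h2 : ParF F g g₂) : g₁ = g₂ := by
  obtain ⟨hF, -, r₁, hr₁, hp₁⟩ := h1
  obtain ⟨-, -, r₂, hr₂, hp₂⟩ := h2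
  obtain rfl : r₁ = r₂ := root_unique hr₁ hr₂
  exact walkPar_unique hF.2.2 ((pathF_iff F g r₁ g₁).mp hp₁) ((pathF_iff F g r₁ g₂).mp hp₂)


variable {G : Type*}

lemma meas_atom (a b : G) : MeasurableSet {F : G × G → Bool | F (a, b) = true} := by
  have : {F : G × G → Bool | F (a, b) = true} = (fun F : G × G → Bool => F (a, b)) ⁻¹' {true} := by
    ext F; simp
  rw [this]
  exact measurable_pi_apply (a, b) (measurableSet_singleton true)

lemma meas_eq (x y : G × G) : MeasurableSet {F : G × G → Bool | F x = F y} := by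
  have h : {F : G × G → Bool | F x = F y} =
      ({F : G × G → Bool | F x = true} ∩ {F | F y = true}) ∪
      ({F : G × G → Bool | F x = true}ᶜ ∩ {F | F y = true}ᶜ) := by
    ext F
    cases hx : F x <;> cases hy : F y <;> simp [hx, hy]
  rw [h]
  exact ((meas_atom_aux x).inter (meas_atom_aux y)).union
    (((meas_atom_aux x).compl).inter ((meas_atom_aux y).compl))
where
  meas_atom_aux (z : G × G) : MeasurableSet {F : G × G → Bool | F z = true} := by
    have : {F : G × G → Bool | F z = true} = (fun F : G × G → Bool => F z) ⁻¹' {true} := by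
      ext F; simp
    rw [this]
    exact measurable_pi_apply z (measurableSet_singleton true)

lemma meas_adjF (a b : G) : MeasurableSet {F : G × G → Bool | adjF F a b} := by
  by_cases h : a = b
  · have : {F : G × G → Bool | adjF F a b} = ∅ := by ext F; simp [adjF, h]
    rw [this]; exact MeasurableSet.empty
  · have : {F : G × G → Bool | adjF F a b} =
        {F : G × G → Bool | F (a, b) = true} ∪ {F | F (b, a) = true} := by
      ext F; simp [adjF, h]
    rw [this]; exact (meas_atom a b).union (meas_atom b a)

lemma meas_chain {R : (G × G → Bool) → G → G → Prop}
    (hR : ∀ a b, MeasurableSet {F | R F a b}) :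
    ∀ l : List G, MeasurableSet {F : G × G → Bool | List.Chain' (R F) l} := by
  intro l
  induction l with
  | nil =>
    have : {F : G × G → Bool | List.Chain' (R F) []} = Set.univ := by ext F; simp [List.Chain']
    rw [this]; exact MeasurableSet.univ
  | cons a t ih =>
    have h1 : {F : G × G → Bool | List.Chain' (R F) (a :: t)} =
        {F : G × G → Bool | ∀ y ∈ t.head?, R F a y} ∩ {F | List.Chain' (R F) t} := by
      ext F; simp [List.Chain', List.isChain_cons]
    rw [h1]
    refine MeasurableSet.inter ?_ ih
    cases t with
    | nil =>
      have : {F : G × G → Bool | ∀ y ∈ ([] : List G).head?, R F a y} = Set.univ := by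
        ext F; simp
      rw [this]; exact MeasurableSet.univ
    | cons b t' =>
      have : {F : G × G → Bool | ∀ y ∈ (b :: t').head?, R F a y} = {F | R F a b} := by
        ext F; simp
      rw [this]; exact hR a b

lemma meas_and_prop {s : Set (G × G → Bool)} (hs : MeasurableSet s) (p : Prop) :
    MeasurableSet {F | F ∈ s ∧ p} := by
  by_cases hp : p
  · have : {F | F ∈ s ∧ p} = s := by ext F; simp [hp]
    rw [this]; exact hs
  · have : {F | F ∈ s ∧ p} = ∅ := by ext F; simp [hp]
    rw [this]; exact MeasurableSet.empty

lemma meas_reachF [Countable G] (g u : G) :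
    MeasurableSet {F : G × G → Bool | reachF F g u} := by
  have h : {F : G × G → Bool | reachF F g u} =
      ⋃ l : List G, {F | List.Chain' (adjF F) (g :: l) ∧ (g :: l).getLast? = some u} := by
    ext F; simp [reachF]
  rw [h]
  exact MeasurableSet.iUnion fun l => meas_and_prop (meas_chain meas_adjF (g :: l)) _

lemma meas_isRootF [Countable G] (g r : G) :
    MeasurableSet {F : G × G → Bool | isRootF F g r} := by
  have h : {F : G × G → Bool | isRootF F g r} =
      {F | reachF F g r} ∩ ⋂ u : G, ({F | reachF F g u}ᶜ ∪ {F | enum G r ≤ enum G u}) := by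
    ext F
    simp only [isRootF, Set.mem_inter_iff, Set.mem_setOf_eq, Set.mem_iInter, Set.mem_union,
      Set.mem_compl_iff]
    constructor
    · rintro ⟨h1, h2⟩
      exact ⟨h1, fun u => or_iff_not_imp_left.mpr fun hu => h2 u (not_not.mp hu)⟩
    · rintro ⟨h1, h2⟩
      refine ⟨h1, fun u hu => ?_⟩
      rcases h2 u with h | h
      · exact absurd hu h
      · exact h
  rw [h]
  refine (meas_reachF g r).inter (MeasurableSet.iInter fun u => ?_)
  by_cases hle : enum G r ≤ enum G u
  · have : {F : G × G → Bool | reachF F g u}ᶜ ∪ {F | enum G r ≤ enum G u} = Set.univ := by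
      ext F; simp [hle]
    rw [this]; exact MeasurableSet.univ
  · have : {F : G × G → Bool | reachF F g u}ᶜ ∪ {F | enum G r ≤ enum G u} =
        {F : G × G → Bool | reachF F g u}ᶜ := by
      ext F; simp [hle]
    rw [this]; exact (meas_reachF g u).compl

lemma meas_pathF [Countable G] (g r g' : G) :
    MeasurableSet {F : G × G → Bool | pathF F g r g'} := by
  have h : {F : G × G → Bool | pathF F g r g'} =
      ⋃ l : List G, {F | List.Chain' (adjF F) (g :: l) ∧
        ((g :: l).Nodup ∧ (g :: l).getLast? = some r ∧ l.head? = some g')} := by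
    ext F; simp [pathF, and_assoc]
  rw [h]
  exact MeasurableSet.iUnion fun l => meas_and_prop (meas_chain meas_adjF (g :: l)) _

def delAdj (F : G × G → Bool) (a b x y : G) : Prop :=
  adjF F x y ∧ ¬(x = a ∧ y = b ∨ x = b ∧ y = a)

lemma delAdj_eq (F : G × G → Bool) (a b : G) :
    (forestGraph F \ SimpleGraph.fromEdgeSet {s(a, b)}).Adj = fun x y => delAdj F a b x y := by
  ext x y
  rw [SimpleGraph.sdiff_adj, SimpleGraph.fromEdgeSet_adj, forestGraph_adj]
  simp only [Set.mem_singleton_iff, Sym2.eq_iff, delAdj]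
  constructor
  · rintro ⟨h1, h2⟩
    exact ⟨h1, fun h => h2 ⟨h, h1.1⟩⟩
  · rintro ⟨h1, h2⟩
    exact ⟨h1, fun h => h2 h.1⟩

def delReach (F : G × G → Bool) (a b : G) : Prop :=
  ∃ l : List G, (a :: l).Chain' (delAdj F a b) ∧ (a :: l).getLast? = some b

lemma meas_delReach [Countable G] (a b : G) :
    MeasurableSet {F : G × G → Bool | delReach F a b} := by
  have hR : ∀ x y, MeasurableSet {F : G × G → Bool | delAdj F a b x y} := by
    intro x y
    exact meas_and_prop (meas_adjF x y) _
  have h : {F : G × G → Bool | delReach F a b} =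
      ⋃ l : List G, {F | List.Chain' (delAdj F a b) (a :: l) ∧ (a :: l).getLast? = some b} := by
    ext F; simp [delReach]
  rw [h]
  exact MeasurableSet.iUnion fun l => meas_and_prop (meas_chain hR (a :: l)) _

lemma acyclic_iff (F : G × G → Bool) :
    (forestGraph F).IsAcyclic ↔ ∀ a b : G, adjF F a b → ¬delReach F a b := by
  rw [SimpleGraph.isAcyclic_iff_forall_adj_isBridge]
  have hreach : ∀ a b : G,
      (forestGraph F \ SimpleGraph.fromEdgeSet {s(a, b)}).Reachable a b ↔ delReach F a b := by
    intro a b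
    rw [reachable_iff_chain, delAdj_eq]
    rfl
  constructor
  · intro h a b hab hd
    have := h ((forestGraph_adj F) ▸ hab : (forestGraph F).Adj a b)
    rw [SimpleGraph.isBridge_iff] at this
    exact this ((hreach a b).mpr hd)
  · intro h a b hab
    rw [SimpleGraph.isBridge_iff]
    refine fun hr => ?_
    exact h a b ((forestGraph_adj F) ▸ hab) ((hreach a b).mp hr)

lemma meas_forest [Countable G] : MeasurableSet {F : G × G → Bool | IsForest F} := by
  have h : {F : G × G → Bool | IsForest F} =
      (⋂ p : G × G, {F : G × G → Bool | F (p.1, p.2) = F (p.2, p.1)}) ∩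
      (⋂ a : G, {F : G × G → Bool | F (a, a) = true}ᶜ) ∩
      (⋂ a : G, ⋂ b : G, ({F : G × G → Bool | adjF F a b}ᶜ ∪ {F | delReach F a b}ᶜ)) := by
    ext F
    simp only [IsForest, Set.mem_inter_iff, Set.mem_iInter, Set.mem_setOf_eq, Set.mem_union,
      Set.mem_compl_iff, acyclic_iff F]
    constructor
    · rintro ⟨h1, h2, h3⟩
      refine ⟨⟨fun p => h1 p.1 p.2, fun a => by simp [h2 a]⟩, fun a b => ?_⟩
      exact or_iff_not_imp_left.mpr fun ha => h3 a b (not_not.mp ha)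
    · rintro ⟨⟨h1, h2⟩, h3⟩
      refine ⟨fun a b => h1 (a, b), fun a => by simpa using h2 a, fun a b hab hd => ?_⟩
      rcases h3 a b with h | h
      · exact h hab
      · exact h hd
  rw [h]
  refine MeasurableSet.inter (MeasurableSet.inter ?_ ?_) ?_
  · exact MeasurableSet.iInter fun p => meas_eq (p.1, p.2) (p.2, p.1)
  · exact MeasurableSet.iInter fun a => (meas_atom a a).compl
  · exact MeasurableSet.iInter fun a => MeasurableSet.iInter fun b =>
      ((meas_adjF a b).compl).union (meas_delReach a b).compl

lemma meas_parF [Countable G] (g g' : G) :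
    MeasurableSet {F : G × G → Bool | ParF F g g'} := by
  have h : {F : G × G → Bool | ParF F g g'} =
      {F | IsForest F} ∩ {F | F (g, g') = true} ∩
      ⋃ r : G, ({F | isRootF F g r} ∩ {F | pathF F g r g'}) := by
    ext F; simp [ParF, and_assoc]
  rw [h]
  exact (meas_forest.inter (meas_atom g g')).inter
    (MeasurableSet.iUnion fun r => (meas_isRootF g r).inter (meas_pathF g r g'))

end Stmt3Aux

/-- for a random forest `μ` of finite width on a countable group `G`, the
function `f_μ(g) = μ{F : (1,g) ∈ F}` satisfies `‖f_μ‖_{T¹(G)} ≤ 2`. -/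
theorem stmt3 {G : Type*} [Group G] [Countable G]
    (μ : Measure ((G × G) → Bool)) [IsProbabilityMeasure μ]
    (hforest : μ {F | IsForest F} = 1)
    (hinv : ∀ g : G,
      Measure.map (fun (F : (G × G) → Bool) (p : G × G) => F (g⁻¹ * p.1, g⁻¹ * p.2)) μ = μ)
    (hwidth : {g : G | μ {F | F (1, g) = true} ≠ 0}.Finite) :
    T1norm (fun g : G => ((μ {F | F (1, g) = true}).toReal : ℂ)) ≤ 2 := by
  classical
  set A : G → G → Set ((G × G) → Bool) := fun g g' => {F | Stmt3Aux.ParF F g g'} with hA_def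
  have hA : ∀ g g', MeasurableSet (A g g') := fun g g' => Stmt3Aux.meas_parF g g'
  have hS : MeasurableSet {F : (G × G) → Bool | IsForest F} := Stmt3Aux.meas_forest
  have hSc : μ {F : (G × G) → Bool | IsForest F}ᶜ = 0 := by
    rw [measure_compl hS (measure_ne_top μ _), hforest, measure_univ, tsub_self]
  -- invariance: μ {F | F(1, g⁻¹g') = 1} = μ {F | F(g,g') = 1}
  have hinv' : ∀ g g' : G,
      μ {F : (G × G) → Bool | F (1, g⁻¹ * g') = true} = μ {F | F (g, g') = true} := by
    intro g g'
    have hT : Measurable fun (F : (G × G) → Bool) (p : G × G) => F (g * p.1, g * p.2) :=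
      measurable_pi_lambda _ fun p => measurable_pi_apply _
    have h1 := hinv g⁻¹
    simp only [inv_inv] at h1
    calc μ {F : (G × G) → Bool | F (1, g⁻¹ * g') = true}
        = (Measure.map (fun (F : (G × G) → Bool) (p : G × G) => F (g * p.1, g * p.2)) μ)
            {F : (G × G) → Bool | F (1, g⁻¹ * g') = true} := by rw [h1]
      _ = μ ((fun (F : (G × G) → Bool) (p : G × G) => F (g * p.1, g * p.2)) ⁻¹'
            {F : (G × G) → Bool | F (1, g⁻¹ * g') = true}) :=
          Measure.map_apply hT (Stmt3Aux.meas_atom 1 (g⁻¹ * g'))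
      _ = μ {F : (G × G) → Bool | F (g * 1, g * (g⁻¹ * g')) = true} := rfl
      _ = μ {F | F (g, g') = true} := by rw [mul_one, mul_inv_cancel_left]
  -- key additivity
  have key : ∀ g g' : G, μ {F : (G × G) → Bool | F (g, g') = true} =
      μ (A g g') + μ (A g' g) := by
    intro g g'
    have hcap : {F : (G × G) → Bool | F (g, g') = true} ∩ {F | IsForest F} =
        A g g' ∪ A g' g := by
      ext F
      constructor
      · rintro ⟨hE, hF⟩
        exact Stmt3Aux.parF_cover hF hE
      · rintro (⟨hF, hE, -⟩ | ⟨hF, hE, -⟩)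
        · exact ⟨hE, hF⟩
        · exact ⟨(hF.1 g g').trans hE, hF⟩
    have h0 : μ ({F : (G × G) → Bool | F (g, g') = true} \ {F | IsForest F}) = 0 :=
      measure_mono_null (Set.diff_subset_compl _ _) hSc
    have := measure_inter_add_diff (μ := μ) {F : (G × G) → Bool | F (g, g') = true} hS
    rw [hcap, h0, add_zero] at this
    rw [← this]
    have hdj : Disjoint (A g g') (A g' g) :=
      Set.disjoint_left.mpr fun F h1 h2 => Stmt3Aux.parF_not_both ⟨h1, h2⟩
    exact measure_union (μ := μ) hdj (hA g' g)
  -- sum bound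
  have hsum : ∀ g : G, ∑' g' : G, μ (A g g') ≤ 1 := by
    intro g
    have hdisj : Pairwise (Function.onFun Disjoint fun g' => A g g') := by
      intro i j hij
      exact Set.disjoint_left.mpr fun F h1 h2 => hij (Stmt3Aux.parF_unique h1 h2)
    rw [← measure_iUnion hdisj fun g' => hA g g']
    exact prob_le_one
  -- the decomposition
  set d : ((G × G → ℂ) × (G × G → ℂ)) :=
    (fun p => ((μ (A p.1 p.2)).toReal : ℂ), fun p => ((μ (A p.2 p.1)).toReal : ℂ)) with hd_def
  have hd : ∀ g g' : G,
      (fun g : G => ((μ {F | F (1, g) = true}).toReal : ℂ)) (g⁻¹ * g') =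
        d.1 (g, g') + d.2 (g, g') := by
    intro g g'
    show ((μ {F | F (1, g⁻¹ * g') = true}).toReal : ℂ) =
      ((μ (A g g')).toReal : ℂ) + ((μ (A g' g)).toReal : ℂ)
    rw [hinv' g g', key g g', ENNReal.toReal_add (measure_ne_top μ _) (measure_ne_top μ _)]
    push_cast
    ring
  have hterm : ∀ g g' : G, ENNReal.ofReal ‖((μ (A g g')).toReal : ℂ)‖ = μ (A g g') := by
    intro g g'
    rw [Complex.norm_real, Real.norm_eq_abs, abs_of_nonneg ENNReal.toReal_nonneg,
      ENNReal.ofReal_toReal (measure_ne_top μ _)]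
  unfold T1norm
  refine le_trans (iInf₂_le d hd) ?_
  have h1 : (⨆ g : G, ∑' g' : G, ENNReal.ofReal ‖d.1 (g, g')‖) ≤ 1 := by
    refine iSup_le fun g => ?_
    calc ∑' g' : G, ENNReal.ofReal ‖d.1 (g, g')‖ = ∑' g' : G, μ (A g g') :=
          tsum_congr fun g' => hterm g g'
      _ ≤ 1 := hsum g
  have h2 : (⨆ g : G, ∑' g' : G, ENNReal.ofReal ‖d.2 (g', g)‖) ≤ 1 := by
    refine iSup_le fun g => ?_
    calc ∑' g' : G, ENNReal.ofReal ‖d.2 (g', g)‖ = ∑' g' : G, μ (A g g') :=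
          tsum_congr fun g' => hterm g g'
      _ ≤ 1 := hsum g
  calc (⨆ g : G, ∑' g' : G, ENNReal.ofReal ‖d.1 (g, g')‖) +
        (⨆ g : G, ∑' g' : G, ENNReal.ofReal ‖d.2 (g', g)‖) ≤ 1 + 1 := add_le_add h1 h2
    _ = 2 := one_add_one_eq_two
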